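/- Let H be a cocommutative Hopf algebra. If A and B are (symmetrical) partial H-module algebras, then the tensor product algebra A⊗B is a (symmetrical) partial H-module algebra via h·(a⊗b) = Σ (h₁·a)⊗(h₂·b). -/

import Mathlib

set_option linter.unusedSectionVars false
open TensorProduct

section PartialHopfPrelude

variable (k : Type) [Field k] (H : Type) [Ring H] [HopfAlgebra k H]

/-- Sweedler-style sum `Σ f h₁ h₂` over the comultiplication of `h`. -/
noncomputable def sweedler {M : Type} [AddCommGroup M] [Module k M]
    (f : H →ₗ[k] H →ₗ[k] M) (h : H) : M :=
  TensorProduct.lift f (Coalgebra.comul h)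

variable {A : Type} [AddCommGroup A] [Module k A]

/-- `Σ (h₁ · a) * (h₂ g · b)`, with an explicit multiplication `mA` on `A`. -/
noncomputable def paRhs (mA : A →ₗ[k] A →ₗ[k] A) (act : H →ₗ[k] A →ₗ[k] A)
    (h g : H) (a b : A) : A :=
  sweedler k H ((mA.comp (act.flip a)).compl₂ ((act.flip b).comp (LinearMap.mulRight k g))) h

/-- `Σ (h₁ g · b) * (h₂ · a)`, with an explicit multiplication `mA` on `A`. -/
noncomputable def paSymmRhs (mA : A →ₗ[k] A →ₗ[k] A) (act : H →ₗ[k] A →ₗ[k] A)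
    (h g : H) (a b : A) : A :=
  sweedler k H ((mA.comp ((act.flip b).comp (LinearMap.mulRight k g))).compl₂ (act.flip a)) h

/-- A (left) partial action of the Hopf algebra `H` on `A`, where the (possibly nonunital,
possibly nonassociative) multiplication of `A` is given explicitly as a bilinear map `mA`:
`1_H · a = a` and `h · (a (g · b)) = Σ (h₁ · a)(h₂ g · b)`. -/
structure IsPartialActionOn (mA : A →ₗ[k] A →ₗ[k] A) (act : H →ₗ[k] A →ₗ[k] A) : Prop where
  one_act : ∀ a : A, act 1 a = a
  act_assoc : ∀ (h g : H) (a b : A), act h (mA a (act g b)) = paRhs k H mA act h g a b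

/-- A symmetrical partial action: additionally `h · ((g · b) a) = Σ (h₁ g · b)(h₂ · a)`. -/
structure IsSymmPartialActionOn (mA : A →ₗ[k] A →ₗ[k] A) (act : H →ₗ[k] A →ₗ[k] A)
    extends IsPartialActionOn k H mA act : Prop where
  act_symm : ∀ (h g : H) (a b : A), act h (mA (act g b) a) = paSymmRhs k H mA act h g a b

variable {B : Type} [NonUnitalRing B] [Module k B] [SMulCommClass k B B] [IsScalarTower k B B]

/-- A partial action of `H` on the nonunital algebra `B` (with its own multiplication). -/
def IsPartialAction (act : H →ₗ[k] B →ₗ[k] B) : Prop :=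
  IsPartialActionOn k H (LinearMap.mul k B) act

/-- A symmetrical partial action of `H` on the nonunital algebra `B`. -/
def IsSymmPartialAction (act : H →ₗ[k] B →ₗ[k] B) : Prop :=
  IsSymmPartialActionOn k H (LinearMap.mul k B) act

end PartialHopfPrelude

set_option maxHeartbeats 1000000
set_option synthInstance.maxHeartbeats 400000

section KeyCocomm
variable (k : Type) [Field k] (H : Type) [Ring H] [HopfAlgebra k H]

/-- apply `f` to the middle leg of `(H⊗H)⊗H`, reassociating. -/
noncomputable def midMap (f : H →ₗ[k] H ⊗[k] H) :
    (H ⊗[k] H) ⊗[k] H →ₗ[k] (H ⊗[k] H) ⊗[k] (H ⊗[k] H) :=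
  (TensorProduct.assoc k (H ⊗[k] H) H H).toLinearMap ∘ₗ
    (((TensorProduct.assoc k H H H).symm.toLinearMap ∘ₗ f.lTensor H).rTensor H)

lemma midMap_tmul (f : H →ₗ[k] H ⊗[k] H) (x y z : H) :
    midMap k H f ((x ⊗ₜ y) ⊗ₜ z) =
      (TensorProduct.assoc k (H ⊗[k] H) H H)
        (((TensorProduct.assoc k H H H).symm (x ⊗ₜ f y)) ⊗ₜ z) := by
  simp [midMap]

lemma ttc_midMap (f : H →ₗ[k] H ⊗[k] H) :
    (TensorProduct.tensorTensorTensorComm k H H H H).toLinearMap ∘ₗ midMap k H f =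
      midMap k H ((TensorProduct.comm k H H).toLinearMap ∘ₗ f) := by
  apply TensorProduct.ext_threefold
  intro x y z
  simp only [LinearMap.comp_apply, midMap_tmul, LinearEquiv.coe_coe]
  induction f y using TensorProduct.induction_on with
  | zero => simp only [tmul_zero, map_zero, zero_tmul]
  | tmul a b => simp [assoc_symm_tmul, assoc_tmul, tensorTensorTensorComm_tmul, comm_tmul]
  | add u v hu hv =>
      simp only [tmul_add, add_tmul, map_add, hu, hv]

lemma assoc_nat :
    (TensorProduct.assoc k (H ⊗[k] H) H H).toLinearMap ∘ₗ
        (LinearMap.rTensor H (LinearMap.rTensor H (Coalgebra.comul (R := k) (A := H)))) =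
      LinearMap.rTensor (H ⊗[k] H) (Coalgebra.comul (R := k) (A := H)) ∘ₗ
        (TensorProduct.assoc k H H H).toLinearMap := by
  apply TensorProduct.ext_threefold
  intro x y z
  simp only [LinearMap.comp_apply, LinearMap.rTensor_tmul, LinearEquiv.coe_coe,
    TensorProduct.assoc_tmul]

lemma mapΔΔ_eq : (TensorProduct.map (Coalgebra.comul (R := k) (A := H)) Coalgebra.comul)
      ∘ₗ Coalgebra.comul =
    midMap k H Coalgebra.comul ∘ₗ
      (LinearMap.rTensor H (Coalgebra.comul (R := k) (A := H)) ∘ₗ Coalgebra.comul) := by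
  have h2 : ((TensorProduct.assoc k H H H).symm.toLinearMap ∘ₗ
        LinearMap.lTensor H (Coalgebra.comul (R := k) (A := H))) ∘ₗ Coalgebra.comul
      = LinearMap.rTensor H (Coalgebra.comul (R := k) (A := H)) ∘ₗ Coalgebra.comul := by
    rw [LinearMap.comp_assoc]
    exact Coalgebra.coassoc_symm
  have h1 : midMap k H Coalgebra.comul ∘ₗ
      (LinearMap.rTensor H (Coalgebra.comul (R := k) (A := H)) ∘ₗ Coalgebra.comul) =
      (TensorProduct.assoc k (H ⊗[k] H) H H).toLinearMap ∘ₗ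
        LinearMap.rTensor H (((TensorProduct.assoc k H H H).symm.toLinearMap ∘ₗ
            LinearMap.lTensor H (Coalgebra.comul (R := k) (A := H))) ∘ₗ Coalgebra.comul) ∘ₗ
          Coalgebra.comul := by
    simp only [midMap, LinearMap.rTensor_comp, LinearMap.comp_assoc]
  rw [h1, h2, LinearMap.rTensor_comp]
  simp only [LinearMap.comp_assoc]
  rw [← LinearMap.comp_assoc, assoc_nat]
  simp only [LinearMap.comp_assoc]
  rw [Coalgebra.coassoc, ← LinearMap.comp_assoc, LinearMap.rTensor_comp_lTensor]

lemma key_cocomm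
    (hcocomm : ∀ h : H, (TensorProduct.comm k H H) (Coalgebra.comul h) = Coalgebra.comul h)
    (h : H) :
    (TensorProduct.tensorTensorTensorComm k H H H H)
        (TensorProduct.map (Coalgebra.comul (R := k) (A := H)) Coalgebra.comul
          (Coalgebra.comul h)) =
      TensorProduct.map (Coalgebra.comul (R := k) (A := H)) Coalgebra.comul
        (Coalgebra.comul h) := by
  have hcc : (TensorProduct.comm k H H).toLinearMap ∘ₗ Coalgebra.comul
      = (Coalgebra.comul (R := k) (A := H)) := LinearMap.ext fun x => hcocomm x
  have e1 := congrFun (congrArg DFunLike.coe (mapΔΔ_eq k H)) h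
  have e2 := congrFun (congrArg DFunLike.coe (ttc_midMap k H (Coalgebra.comul)))
  simp only [LinearMap.comp_apply] at e1 e2
  rw [e1, ← LinearEquiv.coe_coe, e2, hcc]
end KeyCocomm

section AuxMaps
variable (k : Type) [Field k] (H : Type) [Ring H] [HopfAlgebra k H]
variable {A : Type} [NonUnitalRing A] [Module k A] [SMulCommClass k A A] [IsScalarTower k A A]
variable {B : Type} [NonUnitalRing B] [Module k B] [SMulCommClass k B B] [IsScalarTower k B B]
variable (actA : H →ₗ[k] A →ₗ[k] A) (actB : H →ₗ[k] B →ₗ[k] B)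

/-- `Ξ (x ⊗ y) = (actA x) ⊗ (actB y)` as an operator on `A ⊗ B`. -/
noncomputable def Xi : H ⊗[k] H →ₗ[k] (A ⊗[k] B) →ₗ[k] A ⊗[k] B :=
  (TensorProduct.homTensorHomMap (RingHom.id k) A B A B) ∘ₗ TensorProduct.map actA actB

@[simp] lemma Xi_tmul (x y : H) :
    Xi k H actA actB (x ⊗ₜ y) = TensorProduct.map (actA x) (actB y) := by
  simp [Xi]

lemma Xi_apply_tmul (w : H ⊗[k] H) (a : A) (b : B) :
    Xi k H actA actB w (a ⊗ₜ[k] b) =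
      TensorProduct.map (actA.flip a) (actB.flip b) w := by
  induction w using TensorProduct.induction_on with
  | zero => simp
  | tmul x y => simp
  | add u v hu hv => simp [map_add, LinearMap.add_apply, hu, hv]

lemma actT_eq (actT : H →ₗ[k] (A ⊗[k] B) →ₗ[k] (A ⊗[k] B))
    (hactT : ∀ (h : H) (a : A) (b : B),
      actT h (a ⊗ₜ[k] b) =
        TensorProduct.map (actA.flip a) (actB.flip b) (Coalgebra.comul h))
    (h : H) (z : A ⊗[k] B) :
    actT h z = Xi k H actA actB (Coalgebra.comul h) z := by
  induction z using TensorProduct.induction_on with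
  | zero => simp
  | tmul a b => rw [hactT, Xi_apply_tmul]
  | add u v hu hv => simp [map_add, hu, hv]

/-- `Γ (P ⊗ Q) = (Ξ P u) * (Ξ (Q * G) v)`. -/
noncomputable def Gam (u v : A ⊗[k] B) (G : H ⊗[k] H) :
    (H ⊗[k] H) ⊗[k] (H ⊗[k] H) →ₗ[k] A ⊗[k] B :=
  LinearMap.mul' k (A ⊗[k] B) ∘ₗ
    TensorProduct.map ((Xi k H actA actB).flip u)
      (((Xi k H actA actB).flip v) ∘ₗ LinearMap.mulRight k G)

@[simp] lemma Gam_tmul (u v : A ⊗[k] B) (G P Q : H ⊗[k] H) :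
    Gam k H actA actB u v G (P ⊗ₜ Q) =
      (Xi k H actA actB P u) * (Xi k H actA actB (Q * G) v) := by
  simp [Gam]

/-- `Γˢ (P ⊗ Q) = (Ξ (P * G) v) * (Ξ Q u)`. -/
noncomputable def GamS (u v : A ⊗[k] B) (G : H ⊗[k] H) :
    (H ⊗[k] H) ⊗[k] (H ⊗[k] H) →ₗ[k] A ⊗[k] B :=
  LinearMap.mul' k (A ⊗[k] B) ∘ₗ
    TensorProduct.map (((Xi k H actA actB).flip v) ∘ₗ LinearMap.mulRight k G)
      ((Xi k H actA actB).flip u)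

@[simp] lemma GamS_tmul (u v : A ⊗[k] B) (G P Q : H ⊗[k] H) :
    GamS k H actA actB u v G (P ⊗ₜ Q) =
      (Xi k H actA actB (P * G) v) * (Xi k H actA actB Q u) := by
  simp [GamS]

lemma Gam_G_zero (u v : A ⊗[k] B) : Gam k H actA actB u v 0 = 0 := by
  apply TensorProduct.ext'; intro P Q; simp

lemma Gam_G_add (u v : A ⊗[k] B) (G₁ G₂ : H ⊗[k] H) :
    Gam k H actA actB u v (G₁ + G₂) =
      Gam k H actA actB u v G₁ + Gam k H actA actB u v G₂ := by
  apply TensorProduct.ext'; intro P Q; simp [mul_add]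

lemma GamS_G_zero (u v : A ⊗[k] B) : GamS k H actA actB u v 0 = 0 := by
  apply TensorProduct.ext'; intro P Q; simp

lemma GamS_G_add (u v : A ⊗[k] B) (G₁ G₂ : H ⊗[k] H) :
    GamS k H actA actB u v (G₁ + G₂) =
      GamS k H actA actB u v G₁ + GamS k H actA actB u v G₂ := by
  apply TensorProduct.ext'; intro P Q; simp [mul_add, add_mul]

lemma Gam_u_zero (v : A ⊗[k] B) (G : H ⊗[k] H) : Gam k H actA actB 0 v G = 0 := by
  apply TensorProduct.ext'; intro P Q; simp

lemma Gam_u_add (u₁ u₂ v : A ⊗[k] B) (G : H ⊗[k] H) :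
    Gam k H actA actB (u₁ + u₂) v G =
      Gam k H actA actB u₁ v G + Gam k H actA actB u₂ v G := by
  apply TensorProduct.ext'; intro P Q; simp [add_mul]

lemma Gam_v_zero (u : A ⊗[k] B) (G : H ⊗[k] H) : Gam k H actA actB u 0 G = 0 := by
  apply TensorProduct.ext'; intro P Q; simp

lemma Gam_v_add (u v₁ v₂ : A ⊗[k] B) (G : H ⊗[k] H) :
    Gam k H actA actB u (v₁ + v₂) G =
      Gam k H actA actB u v₁ G + Gam k H actA actB u v₂ G := by
  apply TensorProduct.ext'; intro P Q; simp [mul_add]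

lemma GamS_u_zero (v : A ⊗[k] B) (G : H ⊗[k] H) : GamS k H actA actB 0 v G = 0 := by
  apply TensorProduct.ext'; intro P Q; simp

lemma GamS_u_add (u₁ u₂ v : A ⊗[k] B) (G : H ⊗[k] H) :
    GamS k H actA actB (u₁ + u₂) v G =
      GamS k H actA actB u₁ v G + GamS k H actA actB u₂ v G := by
  apply TensorProduct.ext'; intro P Q; simp [mul_add]

lemma GamS_v_zero (u : A ⊗[k] B) (G : H ⊗[k] H) : GamS k H actA actB u 0 G = 0 := by
  apply TensorProduct.ext'; intro P Q; simp

lemma GamS_v_add (u v₁ v₂ : A ⊗[k] B) (G : H ⊗[k] H) :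
    GamS k H actA actB u (v₁ + v₂) G =
      GamS k H actA actB u v₁ G + GamS k H actA actB u v₂ G := by
  apply TensorProduct.ext'; intro P Q; simp [add_mul]

end AuxMaps

section Claims
variable {k : Type} [Field k] {H : Type} [Ring H] [HopfAlgebra k H]
variable {A : Type} [NonUnitalRing A] [Module k A] [SMulCommClass k A A] [IsScalarTower k A A]
variable {B : Type} [NonUnitalRing B] [Module k B] [SMulCommClass k B B] [IsScalarTower k B B]
variable (actA : H →ₗ[k] A →ₗ[k] A) (actB : H →ₗ[k] B →ₗ[k] B)

lemma SL (a : A) (b : B) (c : A) (d : B) (x y : H) (P Q : H ⊗[k] H) :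
    (TensorProduct.lift (((LinearMap.mul k A).comp (actA.flip a)).compl₂
        ((actA.flip c).comp (LinearMap.mulRight k x))) P) ⊗ₜ[k]
      (TensorProduct.lift (((LinearMap.mul k B).comp (actB.flip b)).compl₂
        ((actB.flip d).comp (LinearMap.mulRight k y))) Q) =
    Gam k H actA actB (a ⊗ₜ b) (c ⊗ₜ d) (x ⊗ₜ y)
      ((TensorProduct.tensorTensorTensorComm k H H H H) (P ⊗ₜ Q)) := by
  induction P using TensorProduct.induction_on with
  | zero => simp
  | add P₁ P₂ h₁ h₂ => simp only [map_add, add_tmul, h₁, h₂]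
  | tmul p₁ p₂ =>
    induction Q using TensorProduct.induction_on with
    | zero => simp
    | add Q₁ Q₂ h₁ h₂ => simp only [map_add, tmul_add, h₁, h₂]
    | tmul q₁ q₂ =>
      simp [tensorTensorTensorComm_tmul, Algebra.TensorProduct.tmul_mul_tmul,
        LinearMap.compl₂_apply, LinearMap.mul_apply']

lemma SLs (a : A) (b : B) (c : A) (d : B) (x y : H) (P Q : H ⊗[k] H) :
    (TensorProduct.lift (((LinearMap.mul k A).comp
        ((actA.flip c).comp (LinearMap.mulRight k x))).compl₂ (actA.flip a)) P) ⊗ₜ[k]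
      (TensorProduct.lift (((LinearMap.mul k B).comp
        ((actB.flip d).comp (LinearMap.mulRight k y))).compl₂ (actB.flip b)) Q) =
    GamS k H actA actB (a ⊗ₜ b) (c ⊗ₜ d) (x ⊗ₜ y)
      ((TensorProduct.tensorTensorTensorComm k H H H H) (P ⊗ₜ Q)) := by
  induction P using TensorProduct.induction_on with
  | zero => simp
  | add P₁ P₂ h₁ h₂ => simp only [map_add, add_tmul, h₁, h₂]
  | tmul p₁ p₂ =>
    induction Q using TensorProduct.induction_on with
    | zero => simp
    | add Q₁ Q₂ h₁ h₂ => simp only [map_add, tmul_add, h₁, h₂]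
    | tmul q₁ q₂ =>
      simp [tensorTensorTensorComm_tmul, Algebra.TensorProduct.tmul_mul_tmul,
        LinearMap.compl₂_apply, LinearMap.mul_apply']

lemma claimB (hAo : IsPartialActionOn k H (LinearMap.mul k A) actA)
    (hBo : IsPartialActionOn k H (LinearMap.mul k B) actB) (G w : H ⊗[k] H) :
    ∀ u v : A ⊗[k] B,
      Xi k H actA actB w (u * Xi k H actA actB G v) =
        Gam k H actA actB u v G
          ((TensorProduct.tensorTensorTensorComm k H H H H)
            (TensorProduct.map Coalgebra.comul Coalgebra.comul w)) := by
  induction w using TensorProduct.induction_on with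
  | zero => intro u v; simp
  | add w₁ w₂ h₁ h₂ =>
      intro u v
      simp only [map_add, LinearMap.add_apply, h₁ u v, h₂ u v]
  | tmul p q =>
    induction G using TensorProduct.induction_on with
    | zero => intro u v; simp [Gam_G_zero]
    | add G₁ G₂ h₁ h₂ =>
        intro u v
        simp only [map_add, LinearMap.add_apply, mul_add, Gam_G_add, h₁ u v, h₂ u v]
    | tmul x y =>
      intro u v
      induction u using TensorProduct.induction_on with
      | zero => simp [Gam_u_zero]
      | add u₁ u₂ h₁ h₂ =>
          simp only [add_mul, map_add, Gam_u_add, LinearMap.add_apply, h₁, h₂]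
      | tmul a b =>
        induction v using TensorProduct.induction_on with
        | zero => simp [Gam_v_zero]
        | add v₁ v₂ h₁ h₂ =>
            simp only [map_add, LinearMap.add_apply, mul_add, Gam_v_add, h₁, h₂]
        | tmul c d =>
          have e1 := hAo.act_assoc p x a c
          have e2 := hBo.act_assoc q y b d
          simp only [LinearMap.mul_apply'] at e1 e2
          simp only [Xi_tmul, TensorProduct.map_tmul, Algebra.TensorProduct.tmul_mul_tmul]
          rw [e1, e2]
          simp only [paRhs, sweedler]
          exact SL actA actB a b c d x y _ _

lemma claimBs (hAs : IsSymmPartialActionOn k H (LinearMap.mul k A) actA)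
    (hBs : IsSymmPartialActionOn k H (LinearMap.mul k B) actB) (G w : H ⊗[k] H) :
    ∀ u v : A ⊗[k] B,
      Xi k H actA actB w ((Xi k H actA actB G v) * u) =
        GamS k H actA actB u v G
          ((TensorProduct.tensorTensorTensorComm k H H H H)
            (TensorProduct.map Coalgebra.comul Coalgebra.comul w)) := by
  induction w using TensorProduct.induction_on with
  | zero => intro u v; simp
  | add w₁ w₂ h₁ h₂ =>
      intro u v
      simp only [map_add, LinearMap.add_apply, h₁ u v, h₂ u v]
  | tmul p q =>
    induction G using TensorProduct.induction_on with
    | zero => intro u v; simp [GamS_G_zero]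
    | add G₁ G₂ h₁ h₂ =>
        intro u v
        simp only [map_add, LinearMap.add_apply, add_mul, GamS_G_add, h₁ u v, h₂ u v]
    | tmul x y =>
      intro u v
      induction u using TensorProduct.induction_on with
      | zero => simp [GamS_u_zero]
      | add u₁ u₂ h₁ h₂ =>
          simp only [mul_add, map_add, GamS_u_add, LinearMap.add_apply, h₁, h₂]
      | tmul a b =>
        induction v using TensorProduct.induction_on with
        | zero => simp [GamS_v_zero]
        | add v₁ v₂ h₁ h₂ =>
            simp only [map_add, LinearMap.add_apply, add_mul, GamS_v_add, h₁, h₂]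
        | tmul c d =>
          have e1 := hAs.act_symm p x a c
          have e2 := hBs.act_symm q y b d
          simp only [LinearMap.mul_apply'] at e1 e2
          simp only [Xi_tmul, TensorProduct.map_tmul, Algebra.TensorProduct.tmul_mul_tmul]
          rw [e1, e2]
          simp only [paSymmRhs, sweedler]
          exact SLs actA actB a b c d x y _ _

lemma rhs_eq (actT : H →ₗ[k] (A ⊗[k] B) →ₗ[k] (A ⊗[k] B))
    (hactT : ∀ (h : H) (a : A) (b : B),
      actT h (a ⊗ₜ[k] b) =
        TensorProduct.map (actA.flip a) (actB.flip b) (Coalgebra.comul h))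
    (h g : H) (u v : A ⊗[k] B) :
    paRhs k H (LinearMap.mul k (A ⊗[k] B)) actT h g u v =
      Gam k H actA actB u v (Coalgebra.comul g)
        (TensorProduct.map Coalgebra.comul Coalgebra.comul (Coalgebra.comul h)) := by
  rw [paRhs, sweedler]
  generalize (Coalgebra.comul h : H ⊗[k] H) = w
  induction w using TensorProduct.induction_on with
  | zero => simp
  | add w₁ w₂ h₁ h₂ => simp only [map_add, h₁, h₂]
  | tmul p q =>
    simp only [TensorProduct.lift.tmul, LinearMap.compl₂_apply, LinearMap.comp_apply,
      LinearMap.mulRight_apply, LinearMap.flip_apply, LinearMap.mul_apply',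
      TensorProduct.map_tmul, Gam_tmul]
    rw [actT_eq k H actA actB actT hactT, actT_eq k H actA actB actT hactT,
      Bialgebra.comul_mul]

lemma rhs_eq_s (actT : H →ₗ[k] (A ⊗[k] B) →ₗ[k] (A ⊗[k] B))
    (hactT : ∀ (h : H) (a : A) (b : B),
      actT h (a ⊗ₜ[k] b) =
        TensorProduct.map (actA.flip a) (actB.flip b) (Coalgebra.comul h))
    (h g : H) (u v : A ⊗[k] B) :
    paSymmRhs k H (LinearMap.mul k (A ⊗[k] B)) actT h g u v =
      GamS k H actA actB u v (Coalgebra.comul g)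
        (TensorProduct.map Coalgebra.comul Coalgebra.comul (Coalgebra.comul h)) := by
  rw [paSymmRhs, sweedler]
  generalize (Coalgebra.comul h : H ⊗[k] H) = w
  induction w using TensorProduct.induction_on with
  | zero => simp
  | add w₁ w₂ h₁ h₂ => simp only [map_add, h₁, h₂]
  | tmul p q =>
    simp only [TensorProduct.lift.tmul, LinearMap.compl₂_apply, LinearMap.comp_apply,
      LinearMap.mulRight_apply, LinearMap.flip_apply, LinearMap.mul_apply',
      TensorProduct.map_tmul, GamS_tmul]
    rw [actT_eq k H actA actB actT hactT, actT_eq k H actA actB actT hactT,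
      Bialgebra.comul_mul]

end Claims

section Stmt4

variable {k : Type} [Field k] {H : Type} [Ring H] [HopfAlgebra k H]
variable {A : Type} [NonUnitalRing A] [Module k A] [SMulCommClass k A A] [IsScalarTower k A A]
variable {B : Type} [NonUnitalRing B] [Module k B] [SMulCommClass k B B] [IsScalarTower k B B]

/-- Let `H` be a cocommutative Hopf algebra.  If `A` and `B` are
(symmetrical) partial `H`-module algebras, then the tensor product algebra `A ⊗ B` is a
(symmetrical) partial `H`-module algebra via `h · (a ⊗ b) = Σ (h₁ · a) ⊗ (h₂ · b)`. -/
theorem tensor_product_partial_action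
    (hcocomm : ∀ h : H, (TensorProduct.comm k H H) (Coalgebra.comul h) = Coalgebra.comul h)
    (actA : H →ₗ[k] A →ₗ[k] A) (actB : H →ₗ[k] B →ₗ[k] B)
    (hA : IsPartialAction k H actA) (hB : IsPartialAction k H actB)
    (actT : H →ₗ[k] (A ⊗[k] B) →ₗ[k] (A ⊗[k] B))
    (hactT : ∀ (h : H) (a : A) (b : B),
      actT h (a ⊗ₜ[k] b) =
        TensorProduct.map (actA.flip a) (actB.flip b) (Coalgebra.comul h)) :
    IsPartialAction k H actT ∧
      (IsSymmPartialAction k H actA → IsSymmPartialAction k H actB →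
        IsSymmPartialAction k H actT) := by
  have hAo : IsPartialActionOn k H (LinearMap.mul k A) actA := hA
  have hBo : IsPartialActionOn k H (LinearMap.mul k B) actB := hB
  have hone : ∀ z : A ⊗[k] B, actT 1 z = z := by
    intro z
    rw [actT_eq k H actA actB actT hactT, Bialgebra.comul_one,
      Algebra.TensorProduct.one_def, Xi_tmul]
    induction z using TensorProduct.induction_on with
    | zero => simp
    | tmul a b => simp [hAo.one_act, hBo.one_act]
    | add u v hu hv => simp only [map_add, hu, hv]
  have hassoc : ∀ (h g : H) (u v : A ⊗[k] B),
      actT h ((LinearMap.mul k (A ⊗[k] B)) u (actT g v)) =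
        paRhs k H (LinearMap.mul k (A ⊗[k] B)) actT h g u v := by
    intro h g u v
    rw [actT_eq k H actA actB actT hactT g, actT_eq k H actA actB actT hactT h]
    simp only [LinearMap.mul_apply']
    rw [claimB actA actB hAo hBo, key_cocomm k H hcocomm,
      rhs_eq actA actB actT hactT]
  constructor
  · exact IsPartialActionOn.mk hone hassoc
  · intro hAs hBs
    have hAso : IsSymmPartialActionOn k H (LinearMap.mul k A) actA := hAs
    have hBso : IsSymmPartialActionOn k H (LinearMap.mul k B) actB := hBs
    refine IsSymmPartialActionOn.mk (IsPartialActionOn.mk hone hassoc) ?_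
    intro h g u v
    rw [actT_eq k H actA actB actT hactT g, actT_eq k H actA actB actT hactT h]
    simp only [LinearMap.mul_apply']
    rw [claimBs actA actB hAso hBso, key_cocomm k H hcocomm,
      rhs_eq_s actA actB actT hactT]

end Stmt4
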